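/- Characterization of bifurcation points (Theorem 2.5, first part). Let λ > 0 be irrational. A number ℓ ∈ (0, λ] is a left bifurcation point if and only if ℓ ∈ Λ_L, and ℓ is a right bifurcation point if and only if ℓ ∈ Λ_R. -/

import Mathlib

open Real Set
open scoped Classical

noncomputable section

/-- The interval map g_ℓ with middle interval (1, 1+ℓ) of fixed points:
g_ℓ(x) = x+λ on [0,1], x on (1,1+ℓ), x−1 on [1+ℓ, 1+λ]. -/
def gl (lam l x : ℝ) : ℝ :=
  if x ≤ 1 then x + lam else if x < 1 + l then x else x - 1

/-- The interval exchange g(x) = x+λ on [0,1], x−1 on (1, 1+λ]. -/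
def g0 (lam x : ℝ) : ℝ := if x ≤ 1 then x + lam else x - 1

/-- The set of positive times at which the g_ℓ-orbit of x visits [1, 1+ℓ]. -/
def hitSetI (lam l x : ℝ) : Set ℕ :=
  {n : ℕ | 0 < n ∧ (gl lam l)^[n] x ∈ Set.Icc 1 (1 + l)}

/-- The first hitting time n_ℓ(x) of x to [1, 1+ℓ] (as a natural number; 0 if
the orbit never hits). -/
def nhit (lam l x : ℝ) : ℕ := sInf (hitSetI lam l x)

/-- The first hitting time n_ℓ(x) of x to [1, 1+ℓ], with value ∞ ∈ ℕ∪{∞} if the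
orbit never hits. -/
def nhitE (lam l x : ℝ) : ℕ∞ := sInf ((fun n : ℕ => (n : ℕ∞)) '' hitSetI lam l x)

/-- The first hitting map r_ℓ(x) = g_ℓ^{n_ℓ(x)}(x). -/
def rmap (lam l x : ℝ) : ℝ := (gl lam l)^[nhit lam l x] x

/-- r'_ℓ(x) = r_ℓ(x) outside [1,1+ℓ] and x on [1,1+ℓ]. -/
def rmap' (lam l x : ℝ) : ℝ := if x ∈ Set.Icc 1 (1 + l) then x else rmap lam l x

/-- The left bifurcation set Λ_L (hitting times compared in ℕ∪{∞}). -/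
def LamL (lam : ℝ) : Set ℝ :=
  {l | 0 < l ∧ l ≤ lam ∧ ∀ l' : ℝ, 0 < l' → l' < l → nhitE lam l 1 < nhitE lam l' 1}

/-- The right bifurcation set Λ_R (hitting times compared in ℕ∪{∞}). -/
def LamR (lam : ℝ) : Set ℝ :=
  {l | 0 < l ∧ l ≤ lam ∧
    ∀ l' : ℝ, 0 < l' → l' < l → nhitE lam l (1 + l) < nhitE lam l' (1 + l')}

/- ### Auxiliary lemmas -/

lemma gl_of_le (lam l x : ℝ) (h : x ≤ 1) : gl lam l x = x + lam := if_pos h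

lemma gl_of_ge (lam l x : ℝ) (hl : 0 < l) (h : 1 + l ≤ x) : gl lam l x = x - 1 := by
  rw [gl, if_neg (by linarith), if_neg (by linarith)]

lemma mem_hitSetI (lam l x : ℝ) (n : ℕ) :
    n ∈ hitSetI lam l x ↔ 0 < n ∧ (gl lam l)^[n] x ∈ Set.Icc 1 (1 + l) := Iff.rfl

lemma nhitE_eq_coe (lam l x : ℝ) (N : ℕ) (hN : N ∈ hitSetI lam l x)
    (hmin : ∀ m ∈ hitSetI lam l x, N ≤ m) : nhitE lam l x = (N : ℕ∞) := by
  apply le_antisymm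
  · exact sInf_le ⟨N, hN, rfl⟩
  · refine le_sInf ?_
    rintro _ ⟨m, hm, rfl⟩
    show (N : ℕ∞) ≤ (m : ℕ∞)
    exact_mod_cast hmin m hm

lemma lt_nhitE (lam l x : ℝ) (N : ℕ) (h : ∀ m ∈ hitSetI lam l x, N < m) :
    (N : ℕ∞) < nhitE lam l x := by
  have h1 : ((N + 1 : ℕ) : ℕ∞) ≤ nhitE lam l x := by
    refine le_sInf ?_
    rintro _ ⟨m, hm, rfl⟩
    show ((N + 1 : ℕ) : ℕ∞) ≤ (m : ℕ∞)
    exact_mod_cast h m hm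
  have h2 : (N : ℕ∞) < ((N + 1 : ℕ) : ℕ∞) := by exact_mod_cast Nat.lt_succ_self N
  exact lt_of_lt_of_le h2 h1

lemma nhitE_le_coe (lam l x : ℝ) (N : ℕ) (hN : N ∈ hitSetI lam l x) :
    nhitE lam l x ≤ (N : ℕ∞) := sInf_le ⟨N, hN, rfl⟩

lemma hit_nonempty_of_ne_top (lam l x : ℝ) (h : nhitE lam l x ≠ ⊤) :
    (hitSetI lam l x).Nonempty := by
  by_contra he
  rw [Set.not_nonempty_iff_eq_empty] at he
  simp [nhitE, he] at h

/-- Orbits that avoid the middle interval are affine in time. -/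
lemma orbit_affine (lam l x : ℝ) (hl : 0 < l) (hx : x ≤ 1 ∨ 1 + l ≤ x)
    (N : ℕ) (hN : ∀ m, 1 ≤ m → m < N → (gl lam l)^[m] x ∉ Set.Icc 1 (1 + l)) :
    ∃ a b : ℕ, a + b = N ∧ (gl lam l)^[N] x = x + a * lam - b := by
  induction N with
  | zero => exact ⟨0, 0, rfl, by simp⟩
  | succ n ih =>
    obtain ⟨a, b, hab, hy⟩ := ih (fun m h1 h2 => hN m h1 (h2.trans (Nat.lt_succ_self n)))
    set y := (gl lam l)^[n] x with hyy
    have hy' : y ≤ 1 ∨ 1 + l ≤ y := by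
      rcases Nat.eq_zero_or_pos n with h0 | h0
      · subst h0; simpa [hyy] using hx
      · have h3 := hN n h0 (Nat.lt_succ_self n)
        rw [Set.mem_Icc, not_and_or, not_le, not_le] at h3
        exact h3.imp le_of_lt le_of_lt
    rcases hy' with h | h
    · refine ⟨a + 1, b, by omega, ?_⟩
      rw [Function.iterate_succ_apply', ← hyy, gl_of_le lam l y h, hy]
      push_cast; ring
    · refine ⟨a, b + 1, by omega, ?_⟩
      rw [Function.iterate_succ_apply', ← hyy, gl_of_ge lam l y hl h, hy]
      push_cast; ring

lemma not_affine_fixed (lam : ℝ) (hirr : Irrational lam) (a b N : ℕ)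
    (hab : a + b = N) (hN : 1 ≤ N) (h : (a : ℝ) * lam = b) : False := by
  rcases Nat.eq_zero_or_pos a with h0 | h0
  · subst h0
    simp at h
    have hb : b = 0 := by exact_mod_cast h.symm
    omega
  · have ha : (a : ℝ) ≠ 0 := by positivity
    have hlam : lam = (b : ℝ) / (a : ℝ) := by field_simp; linarith
    exact hirr ⟨(b : ℚ) / (a : ℚ), by push_cast; rw [hlam]⟩

lemma gl_step (lam l l' d y : ℝ) (hl' : 0 < l') (hd0 : 0 ≤ d) (hd : d ≤ l - l')
    (hy : y < 1 ∨ 1 + l < y) : gl lam l' (y - d) = gl lam l y - d := by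
  rcases hy with h | h
  · rw [gl_of_le lam l' _ (by linarith), gl_of_le lam l y h.le]; ring
  · rw [gl_of_ge lam l' _ hl' (by linarith), gl_of_ge lam l y (by linarith) h.le]; ring

/-- Coupling of the g_{l'} orbit of z with the g_l orbit of x, offset by d. -/
lemma couple_iter (lam l l' d x z : ℝ) (hl' : 0 < l') (hd0 : 0 ≤ d) (hd : d ≤ l - l')
    (h1 : gl lam l' z = gl lam l x - d)
    (N : ℕ) (hN : ∀ m, 1 ≤ m → m < N → (gl lam l)^[m] x ∉ Set.Icc 1 (1 + l)) :
    ∀ n, 1 ≤ n → n ≤ N → (gl lam l')^[n] z = (gl lam l)^[n] x - d := by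
  intro n
  induction n with
  | zero => omega
  | succ n ih =>
    intro _ hle
    rcases Nat.eq_zero_or_pos n with h0 | h0
    · subst h0; simpa using h1
    · rw [Function.iterate_succ_apply', Function.iterate_succ_apply',
        ih h0 (by omega)]
      refine gl_step lam l l' d _ hl' hd0 hd ?_
      have h3 := hN n h0 (by omega)
      rw [Set.mem_Icc, not_and_or, not_le, not_le] at h3
      exact h3

/-- **Theorem 2.5, first part (characterization of bifurcation points).**
ℓ ∈ (0, λ] is a left bifurcation point (r_ℓ(1) = 1+ℓ) iff ℓ ∈ Λ_L, and a right
bifurcation point (r_ℓ(1+ℓ) = 1) iff ℓ ∈ Λ_R. -/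
theorem bifurcation_points_characterization
    (lam : ℝ) (hlam : 0 < lam) (hirr : Irrational lam)
    (l : ℝ) (hl0 : 0 < l) (hl : l ≤ lam) :
    (rmap lam l 1 = 1 + l ↔ l ∈ LamL lam) ∧
    (rmap lam l (1 + l) = 1 ↔ l ∈ LamR lam) := by
  constructor
  · -- left bifurcation
    constructor
    · -- r = 1 + l → l ∈ Λ_L
      intro hr
      refine ⟨hl0, hl, ?_⟩
      intro l' hl'0 hl'l
      -- the hitting set is nonempty
      have hne : (hitSetI lam l 1).Nonempty := by
        by_contra he
        rw [Set.not_nonempty_iff_eq_empty] at he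
        rw [rmap, nhit, he, Nat.sInf_empty] at hr
        simp at hr; linarith
      set N := nhit lam l 1 with hNdef
      have hNmem : N ∈ hitSetI lam l 1 := Nat.sInf_mem hne
      have hNpos : 0 < N := hNmem.1
      have hmin : ∀ m ∈ hitSetI lam l 1, N ≤ m := fun m hm => Nat.sInf_le hm
      have havoid : ∀ m, 1 ≤ m → m < N → (gl lam l)^[m] 1 ∉ Set.Icc 1 (1 + l) := by
        intro m h1 h2 hmem
        exact absurd (hmin m ⟨h1, hmem⟩) (by omega)
      have hyN : (gl lam l)^[N] 1 = 1 + l := hr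
      have hcouple := couple_iter lam l l' 0 1 1 hl'0 le_rfl (by linarith)
        (by rw [gl_of_le lam l' 1 le_rfl, gl_of_le lam l 1 le_rfl]; ring) N havoid
      have hEq : nhitE lam l 1 = (N : ℕ∞) := nhitE_eq_coe lam l 1 N hNmem hmin
      rw [hEq]
      refine lt_nhitE lam l' 1 N ?_
      intro m hm
      by_contra hcon
      push_neg at hcon
      have hm1 : 1 ≤ m := hm.1
      have hmc := hcouple m hm1 hcon
      rw [sub_zero] at hmc
      rcases lt_or_eq_of_le hcon with hlt | heq
      · refine havoid m hm1 hlt ?_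
        have := hm.2
        rw [hmc] at this
        exact ⟨this.1, le_trans this.2 (by linarith)⟩
      · rw [heq] at hmc
        have h5 := hm.2
        rw [heq, hmc, hyN] at h5
        have := h5.2
        linarith
    · -- l ∈ Λ_L → r = 1 + l
      rintro ⟨-, -, hL⟩
      have hne : (hitSetI lam l 1).Nonempty := by
        refine hit_nonempty_of_ne_top lam l 1 ?_
        intro htop
        have := hL (l / 2) (by linarith) (by linarith)
        rw [htop] at this
        exact absurd this (by simp)
      set N := nhit lam l 1 with hNdef
      have hNmem : N ∈ hitSetI lam l 1 := Nat.sInf_mem hne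
      have hNpos : 0 < N := hNmem.1
      have hmin : ∀ m ∈ hitSetI lam l 1, N ≤ m := fun m hm => Nat.sInf_le hm
      have havoid : ∀ m, 1 ≤ m → m < N → (gl lam l)^[m] 1 ∉ Set.Icc 1 (1 + l) := by
        intro m h1 h2 hmem
        exact absurd (hmin m ⟨h1, hmem⟩) (by omega)
      set y := (gl lam l)^[N] 1 with hydef
      have hyIcc : y ∈ Set.Icc 1 (1 + l) := hNmem.2
      obtain ⟨a, b, hab, haff⟩ := orbit_affine lam l 1 hl0 (Or.inl le_rfl) N havoid
      have hy1 : y ≠ 1 := by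
        intro h1
        rw [hydef, haff] at h1
        exact not_affine_fixed lam hirr a b N hab hNpos (by linarith)
      show y = 1 + l
      by_contra hcon
      have hylt : y < 1 + l := lt_of_le_of_ne hyIcc.2 hcon
      have hygt : 1 < y := lt_of_le_of_ne hyIcc.1 (Ne.symm hy1)
      set l' := y - 1 with hl'def
      have hl'0 : 0 < l' := by simp [hl'def]; linarith
      have hl'l : l' < l := by simp [hl'def]; linarith
      have hcouple := couple_iter lam l l' 0 1 1 hl'0 le_rfl (by linarith)
        (by rw [gl_of_le lam l' 1 le_rfl, gl_of_le lam l 1 le_rfl]; ring) N havoid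
      have hNmem' : N ∈ hitSetI lam l' 1 := by
        refine ⟨hNpos, ?_⟩
        rw [hcouple N hNpos le_rfl, sub_zero, ← hydef]
        exact ⟨hyIcc.1, by simp [hl'def]⟩
      have h1 := hL l' hl'0 hl'l
      have h2 : nhitE lam l 1 = (N : ℕ∞) := nhitE_eq_coe lam l 1 N hNmem hmin
      have h3 : nhitE lam l' 1 ≤ (N : ℕ∞) := nhitE_le_coe lam l' 1 N hNmem'
      rw [h2] at h1
      exact absurd (lt_of_lt_of_le h1 h3) (lt_irrefl _)
  · -- right bifurcation
    constructor
    · -- r(1+l) = 1 → l ∈ Λ_R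
      intro hr
      refine ⟨hl0, hl, ?_⟩
      intro l' hl'0 hl'l
      have hne : (hitSetI lam l (1 + l)).Nonempty := by
        by_contra he
        rw [Set.not_nonempty_iff_eq_empty] at he
        rw [rmap, nhit, he, Nat.sInf_empty] at hr
        simp at hr; linarith
      set N := nhit lam l (1 + l) with hNdef
      have hNmem : N ∈ hitSetI lam l (1 + l) := Nat.sInf_mem hne
      have hNpos : 0 < N := hNmem.1
      have hmin : ∀ m ∈ hitSetI lam l (1 + l), N ≤ m := fun m hm => Nat.sInf_le hm
      have havoid : ∀ m, 1 ≤ m → m < N → (gl lam l)^[m] (1 + l) ∉ Set.Icc 1 (1 + l) := by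
        intro m h1 h2 hmem
        exact absurd (hmin m ⟨h1, hmem⟩) (by omega)
      have hyN : (gl lam l)^[N] (1 + l) = 1 := hr
      set d := l - l' with hddef
      have hd0 : 0 < d := by simp [hddef]; linarith
      have hbase : gl lam l' (1 + l') = gl lam l (1 + l) - d := by
        rw [gl_of_ge lam l' (1 + l') hl'0 le_rfl, gl_of_ge lam l (1 + l) hl0 le_rfl,
          hddef]; ring
      have hz : (1 + l' : ℝ) = (1 + l) - d := by rw [hddef]; ring
      have hcouple := couple_iter lam l l' d (1 + l) (1 + l') hl'0 hd0.le
        (le_of_eq rfl) hbase N havoid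
      have hEq : nhitE lam l (1 + l) = (N : ℕ∞) := nhitE_eq_coe lam l (1 + l) N hNmem hmin
      rw [hEq]
      refine lt_nhitE lam l' (1 + l') N ?_
      intro m hm
      by_contra hcon
      push_neg at hcon
      have hm1 : 1 ≤ m := hm.1
      have hmc := hcouple m hm1 hcon
      rcases lt_or_eq_of_le hcon with hlt | heq
      · refine havoid m hm1 hlt ?_
        have h5 := hm.2
        rw [hmc] at h5
        constructor
        · linarith [h5.1]
        · have h6 := h5.2
          have h7 : d = l - l' := hddef
          linarith
      · rw [heq] at hmc
        have h5 := hm.2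
        rw [heq, hmc, hyN] at h5
        have h6 := h5.1
        have h7 : d = l - l' := hddef
        linarith
    · -- l ∈ Λ_R → r(1+l) = 1
      rintro ⟨-, -, hR⟩
      have hne : (hitSetI lam l (1 + l)).Nonempty := by
        refine hit_nonempty_of_ne_top lam l (1 + l) ?_
        intro htop
        have := hR (l / 2) (by linarith) (by linarith)
        rw [htop] at this
        exact absurd this (by simp)
      set N := nhit lam l (1 + l) with hNdef
      have hNmem : N ∈ hitSetI lam l (1 + l) := Nat.sInf_mem hne
      have hNpos : 0 < N := hNmem.1
      have hmin : ∀ m ∈ hitSetI lam l (1 + l), N ≤ m := fun m hm => Nat.sInf_le hm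
      have havoid : ∀ m, 1 ≤ m → m < N → (gl lam l)^[m] (1 + l) ∉ Set.Icc 1 (1 + l) := by
        intro m h1 h2 hmem
        exact absurd (hmin m ⟨h1, hmem⟩) (by omega)
      set y := (gl lam l)^[N] (1 + l) with hydef
      have hyIcc : y ∈ Set.Icc 1 (1 + l) := hNmem.2
      obtain ⟨a, b, hab, haff⟩ := orbit_affine lam l (1 + l) hl0 (Or.inr le_rfl) N havoid
      have hytop : y ≠ 1 + l := by
        intro h1
        rw [hydef, haff] at h1
        exact not_affine_fixed lam hirr a b N hab hNpos (by linarith)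
      show y = 1
      by_contra hcon
      have hygt : 1 < y := lt_of_le_of_ne hyIcc.1 (Ne.symm hcon)
      have hylt : y < 1 + l := lt_of_le_of_ne hyIcc.2 hytop
      set l' := 1 + l - y with hl'def
      have hl'0 : 0 < l' := by simp [hl'def]; linarith
      have hl'l : l' < l := by rw [hl'def]; linarith
      set d := l - l' with hddef
      have hd0 : 0 < d := by simp [hddef]; linarith
      have hbase : gl lam l' (1 + l') = gl lam l (1 + l) - d := by
        rw [gl_of_ge lam l' (1 + l') hl'0 le_rfl, gl_of_ge lam l (1 + l) hl0 le_rfl,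
          hddef]; ring
      have hcouple := couple_iter lam l l' d (1 + l) (1 + l') hl'0 hd0.le
        (le_of_eq rfl) hbase N havoid
      have hNmem' : N ∈ hitSetI lam l' (1 + l') := by
        refine ⟨hNpos, ?_⟩
        rw [hcouple N hNpos le_rfl, ← hydef]
        constructor
        · rw [hddef, hl'def]; linarith
        · rw [hddef, hl'def]; linarith
      have h1 := hR l' hl'0 hl'l
      have h2 : nhitE lam l (1 + l) = (N : ℕ∞) := nhitE_eq_coe lam l (1 + l) N hNmem hmin
      have h3 : nhitE lam l' (1 + l') ≤ (N : ℕ∞) := nhitE_le_coe lam l' (1 + l') N hNmem'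
      rw [h2] at h1
      exact absurd (lt_of_lt_of_le h1 h3) (lt_irrefl _)

end
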